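/- Up to homeomorphism, the Cantor set is the unique non-empty compact 0-dimensional dense-in-itself metrizable space; equivalently, every compact, metrizable, totally disconnected, perfect, non-empty topological space is homeomorphic to the Cantor set. -/

import Mathlib

open Set TopologicalSpace

section Brouwer
variable {X : Type*} [MetricSpace X] [CompactSpace X] [TotallyDisconnectedSpace X]

/-- In a perfect space, every nonempty open set has two distinct points. -/
lemma brouwer_two_points [PerfectSpace X] {C : Set X} (hC : IsOpen C) (hne : C.Nonempty) :
    ∃ x ∈ C, ∃ y ∈ C, x ≠ y := by
  obtain ⟨x, hx⟩ := hne
  have h := preperfect_iff_nhds.mp (PerfectSpace.univ_preperfect (α := X)) x trivial C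
    (hC.mem_nhds hx)
  obtain ⟨y, ⟨hyC, -⟩, hyx⟩ := h
  exact ⟨x, hx, y, hyC, fun h => hyx h.symm⟩

/-- Split a nonempty clopen set with two points into two nonempty clopen pieces. -/
lemma brouwer_split [PerfectSpace X] {C : Set X} (hC : IsClopen C) (hne : C.Nonempty) :
    ∃ A B : Set X, IsClopen A ∧ IsClopen B ∧ A.Nonempty ∧ B.Nonempty ∧
      Disjoint A B ∧ A ∪ B = C := by
  obtain ⟨x, hx, y, hy, hxy⟩ := brouwer_two_points hC.2 hne
  have hopen : IsOpen (C \ {y}) := hC.2.sdiff isClosed_singleton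
  obtain ⟨V, hV, hxV, hVsub⟩ := compact_exists_isClopen_in_isOpen hopen ⟨hx, hxy⟩
  refine ⟨V, C \ V, hV, hC.diff hV, ⟨x, hxV⟩, ⟨y, hy, fun hyV => (hVsub hyV).2 rfl⟩,
    disjoint_sdiff_right.mono_left le_rfl, ?_⟩
  rw [union_diff_cancel (fun z hz => (hVsub hz).1)]

end Brouwer

section Part
variable {X : Type*} [MetricSpace X] [CompactSpace X] [TotallyDisconnectedSpace X]

/-- `P` is a partition of `C` into `n` nonempty clopen pieces of diameter at most `ε`. -/
def IsPart (C : Set X) (ε : ℝ) {n : ℕ} (P : Fin n → Set X) : Prop :=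
  (∀ i, IsClopen (P i)) ∧ (∀ i, (P i).Nonempty) ∧
  (∀ i, ∀ x ∈ P i, ∀ y ∈ P i, dist x y ≤ ε) ∧
  (∀ i j, i ≠ j → Disjoint (P i) (P j)) ∧ (⋃ i, P i) = C

lemma part_exists {C : Set X} (hC : IsClopen C) {ε : ℝ} (hε : 0 < ε) :
    ∃ (n : ℕ) (P : Fin n → Set X), IsPart C ε P := by
  classical
  -- choose small clopen neighborhoods
  have hU : ∀ z : C, ∃ V : Set X, IsClopen V ∧ (z : X) ∈ V ∧ V ⊆ Metric.ball (z : X) (ε/2) ∩ C :=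
    fun z => compact_exists_isClopen_in_isOpen
      (Metric.isOpen_ball.inter hC.2) ⟨Metric.mem_ball_self (by linarith), z.2⟩
  choose U hUclopen hUmem hUsub using hU
  have hcover : C ⊆ ⋃ z : C, U z := fun x hx => mem_iUnion.mpr ⟨⟨x, hx⟩, hUmem _⟩
  obtain ⟨t, ht⟩ := (hC.1.isCompact).elim_finite_subcover U (fun z => (hUclopen z).2) hcover
  set n := t.card with hn
  set e : Fin n → ↥t := fun i => t.equivFin.symm i with he
  set Q : Fin n → Set X := fun i => U (e i : ↥t) with hQdef
  have hQclopen : ∀ i, IsClopen (Q i) := fun i => hUclopen _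
  have hQsmall : ∀ i, ∀ x ∈ Q i, ∀ y ∈ Q i, dist x y ≤ ε := by
    intro i x hx y hy
    have h1 := (hUsub _ hx).1
    have h2 := (hUsub _ hy).1
    rw [Metric.mem_ball] at h1 h2
    calc dist x y ≤ dist x _ + dist _ y := dist_triangle _ _ _
      _ ≤ ε/2 + ε/2 := by
          rw [dist_comm] at h2
          exact add_le_add h1.le h2.le
      _ = ε := by ring
  have hQsub : ∀ i, Q i ⊆ C := fun i x hx => (hUsub _ hx).2
  have hQcover : C ⊆ ⋃ i, Q i := by
    intro x hx
    obtain ⟨z, hz⟩ := mem_iUnion₂.mp (ht hx)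
    exact mem_iUnion.mpr ⟨t.equivFin ⟨z, hz.1⟩, by
      simpa [hQdef, he] using hz.2⟩
  -- disjointify
  set W : Fin n → Set X := fun i => ⋃ j, ⋃ (_ : j < i), Q j with hW
  set V : Fin n → Set X := fun i => Q i \ W i with hV
  have hVclopen : ∀ i, IsClopen (V i) :=
    fun i => (hQclopen i).diff
      (isClopen_iUnion_of_finite fun j => isClopen_iUnion_of_finite fun _ => hQclopen j)
  have hVQ : ∀ i, V i ⊆ Q i := fun i => diff_subset
  have hVdisj : ∀ i j, i ≠ j → Disjoint (V i) (V j) := by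
    intro i j hij
    rcases hij.lt_or_gt with h | h
    · exact Set.disjoint_left.mpr fun x hxi hxj =>
        hxj.2 (mem_iUnion.mpr ⟨i, mem_iUnion.mpr ⟨h, hVQ i hxi⟩⟩)
    · exact Set.disjoint_left.mpr fun x hxi hxj =>
        hxi.2 (mem_iUnion.mpr ⟨j, mem_iUnion.mpr ⟨h, hVQ j hxj⟩⟩)
  have hVcover : (⋃ i, V i) = ⋃ i, Q i := by
    apply subset_antisymm (iUnion_mono hVQ)
    intro x hx
    have hne : (Finset.univ.filter (fun j => x ∈ Q j)).Nonempty := by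
      obtain ⟨i, hi⟩ := mem_iUnion.mp hx
      exact ⟨i, by simp [hi]⟩
    set i := (Finset.univ.filter (fun j => x ∈ Q j)).min' hne with hi
    have hxQ : x ∈ Q i := by
      have := (Finset.univ.filter (fun j => x ∈ Q j)).min'_mem hne
      simpa using this
    refine mem_iUnion.mpr ⟨i, hxQ, fun hxW => ?_⟩
    obtain ⟨j, hj⟩ := mem_iUnion.mp hxW
    obtain ⟨hji, hxj⟩ := mem_iUnion.mp hj
    exact absurd (Finset.min'_le _ j (by simp [hxj])) (not_le.mpr hji)
  -- drop empty pieces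
  set s : Finset (Fin n) := Finset.univ.filter (fun i => (V i).Nonempty) with hs
  set m := s.card with hm
  set g : Fin m → ↥s := fun i => s.equivFin.symm i with hg
  have hVC : (⋃ i, V i) = C := by
    rw [hVcover]
    exact subset_antisymm (iUnion_subset hQsub) hQcover
  refine ⟨m, fun i => V (g i : ↥s), fun i => hVclopen _, fun i => ?_, fun i => ?_,
    fun i j hij => ?_, ?_⟩
  · have h2 := (g i).2
    simp only [hs, Finset.mem_filter] at h2
    exact h2.2
  · exact fun x hx y hy => hQsmall _ x (hVQ _ hx) y (hVQ _ hy)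
  · refine hVdisj _ _ fun h => hij ?_
    have : g i = g j := Subtype.ext h
    exact s.equivFin.symm.injective this
  · rw [← hVC]
    apply subset_antisymm
    · exact iUnion_subset fun i => subset_iUnion V _
    · intro x hx
      obtain ⟨i, hi⟩ := mem_iUnion.mp hx
      have his : i ∈ s := by rw [hs]; simp; exact ⟨x, hi⟩
      refine mem_iUnion.mpr ⟨s.equivFin ⟨i, his⟩, ?_⟩
      simpa [hg] using hi

lemma part_succ [PerfectSpace X] {C : Set X} {ε : ℝ} {n : ℕ} (hn : 0 < n)
    {P : Fin n → Set X} (hP : IsPart C ε P) :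
    ∃ P' : Fin (n + 1) → Set X, IsPart C ε P' := by
  classical
  obtain ⟨hcl, hne, hsm, hdisj, hun⟩ := hP
  set i₀ : Fin n := ⟨0, hn⟩ with hi₀
  obtain ⟨A, B, hA, hB, hAne, hBne, hAB, hABU⟩ := brouwer_split (hcl i₀) (hne i₀)
  have hAsub : A ⊆ P i₀ := hABU ▸ subset_union_left
  have hBsub : B ⊆ P i₀ := hABU ▸ subset_union_right
  set Q : Fin n → Set X := Function.update P i₀ B with hQ
  have hQval : ∀ i, Q i = if i = i₀ then B else P i := by
    intro i
    by_cases h : i = i₀ <;> simp [hQ, h]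
  have hQsub : ∀ i, Q i ⊆ P i := by
    intro i; rw [hQval]; split
    · next h => exact h ▸ hBsub
    · exact le_rfl
  refine ⟨Fin.cons A Q, fun i => ?_, fun i => ?_, fun i x hx y hy => ?_, fun i j hij => ?_, ?_⟩
  · refine Fin.cases ?_ (fun j => ?_) i
    · simpa using hA
    · rw [Fin.cons_succ, hQval]; split
      · exact hB
      · exact hcl j
  · refine Fin.cases ?_ (fun j => ?_) i
    · simpa using hAne
    · rw [Fin.cons_succ, hQval]; split
      · exact hBne
      · exact hne j
  · revert hx hy
    refine Fin.cases ?_ (fun j => ?_) i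
    · rw [Fin.cons_zero]
      exact fun hx hy => hsm i₀ x (hAsub hx) y (hAsub hy)
    · rw [Fin.cons_succ]
      exact fun hx hy => hsm j x (hQsub j hx) y (hQsub j hy)
  · -- disjointness
    rcases Fin.eq_zero_or_eq_succ i with rfl | ⟨i', rfl⟩ <;>
      rcases Fin.eq_zero_or_eq_succ j with rfl | ⟨j', rfl⟩
    · exact absurd rfl hij
    · rw [Fin.cons_zero, Fin.cons_succ, hQval]
      split
      · exact hAB
      · next h => exact Set.disjoint_left.mpr fun x hx hx2 =>
          (hdisj i₀ j' (fun he => h he.symm)).le_bot ⟨hAsub hx, hx2⟩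
    · rw [Fin.cons_zero, Fin.cons_succ, hQval]
      split
      · exact hAB.symm
      · next h => exact Set.disjoint_right.mpr fun x hx hx2 =>
          (hdisj i₀ i' (fun he => h he.symm)).le_bot ⟨hAsub hx, hx2⟩
    · rw [Fin.cons_succ, Fin.cons_succ]
      have hij' : i' ≠ j' := fun h => hij (by rw [h])
      rw [hQval, hQval]
      split
      · next h1 =>
        split
        · next h2 => exact absurd (h1.trans h2.symm) hij'
        · next h2 => exact Set.disjoint_left.mpr fun x hx hx2 =>
            (hdisj i₀ j' (fun he => h2 he.symm)).le_bot ⟨hBsub hx, hx2⟩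
      · next h1 =>
        split
        · next _ => exact Set.disjoint_right.mpr fun x hx hx2 =>
            (hdisj i₀ i' (fun he => h1 he.symm)).le_bot ⟨hBsub hx, hx2⟩
        · exact hdisj i' j' hij'
  · rw [← hun]
    apply subset_antisymm
    · apply iUnion_subset
      intro i
      refine Fin.cases ?_ (fun j => ?_) i
      · rw [Fin.cons_zero]
        exact hAsub.trans (subset_iUnion P i₀)
      · rw [Fin.cons_succ]
        exact (hQsub j).trans (subset_iUnion P j)
    · intro x hx
      obtain ⟨i, hi⟩ := mem_iUnion.mp hx
      by_cases h : i = i₀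
      · subst h
        rcases (hABU ▸ hi : x ∈ A ∪ B) with hxA | hxB
        · exact mem_iUnion.mpr ⟨0, by simpa using hxA⟩
        · exact mem_iUnion.mpr ⟨i₀.succ, by rw [Fin.cons_succ, hQval]; simp [hxB]⟩
      · exact mem_iUnion.mpr ⟨i.succ, by rw [Fin.cons_succ, hQval]; simp [h, hi]⟩

lemma part_ge [PerfectSpace X] {C : Set X} (hC : IsClopen C) (hCne : C.Nonempty) {ε : ℝ}
    (hε : 0 < ε) : ∃ N : ℕ, ∀ m, N ≤ m → ∃ P : Fin m → Set X, IsPart C ε P := by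
  obtain ⟨n, P, hP⟩ := part_exists hC hε
  have hn : 0 < n := by
    rcases Nat.eq_zero_or_pos n with h | h
    · exfalso
      obtain ⟨x, hx⟩ := hCne
      rw [← hP.2.2.2.2] at hx
      obtain ⟨i, -⟩ := mem_iUnion.mp hx
      exact absurd i.2 (by omega)
    · exact h
  refine ⟨n, fun m hm => ?_⟩
  induction m, hm using Nat.le_induction with
  | base => exact ⟨P, hP⟩
  | succ m hm ih =>
    obtain ⟨P', hP'⟩ := ih
    exact part_succ (lt_of_lt_of_le hn hm) hP'

end Part

section Stage

variable (X : Type*) [MetricSpace X] [CompactSpace X] [TotallyDisconnectedSpace X]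

/-- A stage: a locally constant surjection onto a finite Cantor approximation. -/
structure BStage where
  k : ℕ
  p : X → Fin k → Bool
  lc : IsLocallyConstant p
  surj : Function.Surjective p

variable {X}

/-- The refinement step. -/
lemma bstage_step [PerfectSpace X] (S : BStage X) {ε : ℝ} (hε : 0 < ε) :
    ∃ T : BStage X, ∃ hk : S.k ≤ T.k,
      (∀ x i, T.p x (Fin.castLE hk i) = S.p x i) ∧ S.k < T.k ∧
      (∀ x y, T.p x = T.p y → dist x y ≤ ε) := by
  classical
  -- fibers of S.p are nonempty clopen sets
  have hfib : ∀ v : Fin S.k → Bool, IsClopen (S.p ⁻¹' {v}) := fun v => S.lc.isClopen_fiber v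
  have hfibne : ∀ v : Fin S.k → Bool, (S.p ⁻¹' {v}).Nonempty := fun v => by
    obtain ⟨x, hx⟩ := S.surj v; exact ⟨x, hx⟩
  choose N hN using fun v : Fin S.k → Bool => part_ge (hfib v) (hfibne v) hε
  set N₀ : ℕ := Finset.univ.sup N with hN₀
  set j : ℕ := N₀ + 1 with hj
  have hcard : ∀ v, N v ≤ 2 ^ j := by
    intro v
    calc N v ≤ N₀ := Finset.le_sup (Finset.mem_univ v)
      _ ≤ 2 ^ N₀ := Nat.le_of_lt (Nat.lt_two_pow_self (n := N₀))
      _ ≤ 2 ^ j := Nat.pow_le_pow_right (by norm_num) (by omega)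
  choose P hP using fun v : Fin S.k → Bool => hN v (2 ^ j) (hcard v)
  -- encode pieces by Fin j → Bool
  have hcard2 : Fintype.card (Fin j → Bool) = 2 ^ j := by simp
  set e : (Fin j → Bool) ≃ Fin (2 ^ j) := Fintype.equivFinOfCardEq hcard2 with he
  -- the index map
  have hex : ∀ x : X, ∃ i : Fin (2 ^ j), x ∈ P (S.p x) i := by
    intro x
    have : x ∈ S.p ⁻¹' {S.p x} := rfl
    rw [← (hP (S.p x)).2.2.2.2] at this
    exact mem_iUnion.mp this
  choose idx hidx using hex
  have hidx_unique : ∀ x v i, S.p x = v → x ∈ P v i → idx x = i := by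
    intro x v i hv hxi
    subst hv
    by_contra h
    exact ((hP (S.p x)).2.2.2.1 _ _ h).le_bot ⟨hidx x, hxi⟩
  have hPsub : ∀ v i, P v i ⊆ S.p ⁻¹' {v} := by
    intro v i
    rw [← (hP v).2.2.2.2]
    exact subset_iUnion (P v) i
  set q : X → Fin (S.k + j) → Bool :=
    fun x => Fin.append (S.p x) (e.symm (idx x)) with hq
  -- fiber computation
  have hfiber : ∀ b : Fin (S.k + j) → Bool,
      q ⁻¹' {b} = P (fun i => b (Fin.castAdd j i)) (e (fun i => b (Fin.natAdd S.k i))) := by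
    intro b
    set v : Fin S.k → Bool := fun i => b (Fin.castAdd j i)
    set w : Fin j → Bool := fun i => b (Fin.natAdd S.k i)
    ext x
    simp only [mem_preimage, mem_singleton_iff]
    constructor
    · intro hxb
      have hv : S.p x = v := by
        funext i
        have := congrFun hxb (Fin.castAdd j i)
        exact (Fin.append_left (S.p x) (e.symm (idx x)) i).symm.trans this
      have hw : e.symm (idx x) = w := by
        funext i
        have := congrFun hxb (Fin.natAdd S.k i)
        exact (Fin.append_right (S.p x) (e.symm (idx x)) i).symm.trans this
      have : idx x = e w := by rw [← hw, Equiv.apply_symm_apply]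
      rw [← hv, ← this]
      exact hidx x
    · intro hxP
      have hv : S.p x = v := hPsub v _ hxP
      have hiw : idx x = e w := hidx_unique x v (e w) hv hxP
      funext i
      refine Fin.addCases (fun i' => ?_) (fun i' => ?_) i
      · exact (Fin.append_left (S.p x) (e.symm (idx x)) i').trans (congrFun hv i')
      · refine (Fin.append_right (S.p x) (e.symm (idx x)) i').trans ?_
        rw [hiw, Equiv.symm_apply_apply]
  have hqlc : IsLocallyConstant q := by
    rw [IsLocallyConstant.iff_isOpen_fiber]
    intro b
    rw [hfiber b]
    exact ((hP _).1 _).2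
  have hqsurj : Function.Surjective q := by
    intro b
    have : (q ⁻¹' {b}).Nonempty := by
      rw [hfiber b]
      exact (hP _).2.1 _
    obtain ⟨x, hx⟩ := this
    exact ⟨x, hx⟩
  refine ⟨⟨S.k + j, q, hqlc, hqsurj⟩, Nat.le_add_right _ _, fun x i => ?_, by simp [hj], ?_⟩
  · exact Fin.append_left (S.p x) (e.symm (idx x)) i
  · intro x y hxy
    have hxy' : q x = q y := hxy
    have hx : x ∈ q ⁻¹' {q x} := rfl
    have hy : y ∈ q ⁻¹' {q x} := by
      rw [mem_preimage, mem_singleton_iff]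
      exact hxy'.symm
    rw [hfiber (q x)] at hx hy
    exact (hP _).2.2.1 _ x hx y hy

end Stage

section Main
variable (X : Type*) [MetricSpace X] [CompactSpace X] [TotallyDisconnectedSpace X]
  [PerfectSpace X] [Nonempty X]

/-- The initial (trivial) stage. -/
def bstage0 : BStage X where
  k := 0
  p := fun _ => Fin.elim0
  lc := IsLocallyConstant.const _
  surj := fun v => ⟨Classical.arbitrary X, funext fun i => i.elim0⟩

/-- The recursively refined sequence of stages. -/
noncomputable def bseq : ℕ → BStage X
  | 0 => bstage0 X
  | n + 1 => (bstage_step (bseq n) (ε := ((n : ℝ) + 1)⁻¹) (by positivity)).choose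

lemma bseq_succ (n : ℕ) :
    ∃ hk : (bseq X n).k ≤ (bseq X (n + 1)).k,
      (∀ x i, (bseq X (n + 1)).p x (Fin.castLE hk i) = (bseq X n).p x i) ∧
      (bseq X n).k < (bseq X (n + 1)).k ∧
      (∀ x y, (bseq X (n + 1)).p x = (bseq X (n + 1)).p y → dist x y ≤ ((n : ℝ) + 1)⁻¹) :=
  (bstage_step (bseq X n) (ε := ((n : ℝ) + 1)⁻¹) (by positivity)).choose_spec

lemma bseq_k_ge (n : ℕ) : n ≤ (bseq X n).k := by
  induction n with
  | zero => exact Nat.zero_le _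
  | succ n ih =>
    obtain ⟨-, -, hlt, -⟩ := bseq_succ X n
    omega

lemma bseq_compat : ∀ {n m : ℕ} (h : n ≤ m),
    ∃ hk : (bseq X n).k ≤ (bseq X m).k,
      ∀ x i, (bseq X m).p x (Fin.castLE hk i) = (bseq X n).p x i := by
  intro n m h
  induction m, h using Nat.le_induction with
  | base => exact ⟨le_rfl, fun x i => congrArg (fun j => (bseq X n).p x j) (Fin.ext rfl)⟩
  | succ m hm ih =>
    obtain ⟨h1, hc1⟩ := ih
    obtain ⟨h2, hc2, -, -⟩ := bseq_succ X m
    refine ⟨h1.trans h2, fun x i => ?_⟩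
    have : Fin.castLE (h1.trans h2) i = Fin.castLE h2 (Fin.castLE h1 i) := Fin.ext rfl
    rw [this, hc2, hc1]

/-- The candidate homeomorphism to Cantor space. -/
noncomputable def bmap (x : X) : ℕ → Bool := fun m =>
  (bseq X (m + 1)).p x ⟨m, lt_of_lt_of_le (Nat.lt_succ_self m) (bseq_k_ge X (m + 1))⟩

lemma bmap_eq (n : ℕ) (x : X) (m : ℕ) (h : m < (bseq X n).k) :
    (bseq X n).p x ⟨m, h⟩ = bmap X x m := by
  have hm1 : m < (bseq X (m + 1)).k := lt_of_lt_of_le (Nat.lt_succ_self m) (bseq_k_ge X (m + 1))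
  rcases le_total n (m + 1) with h1 | h1
  · obtain ⟨hk, hc⟩ := bseq_compat X h1
    have := hc x ⟨m, h⟩
    rw [show Fin.castLE hk ⟨m, h⟩ = ⟨m, hm1⟩ from Fin.ext rfl] at this
    exact this.symm
  · obtain ⟨hk, hc⟩ := bseq_compat X h1
    have := hc x ⟨m, hm1⟩
    rw [show Fin.castLE hk ⟨m, hm1⟩ = ⟨m, h⟩ from Fin.ext rfl] at this
    exact this

lemma bmap_continuous : Continuous (bmap X) :=
  continuous_pi fun m => (continuous_apply _).comp (bseq X (m + 1)).lc.continuous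

lemma bmap_injective : Function.Injective (bmap X) := by
  intro x y hxy
  have key : ∀ n : ℕ, dist x y ≤ ((n : ℝ) + 1)⁻¹ := by
    intro n
    obtain ⟨-, -, -, hsmall⟩ := bseq_succ X n
    refine hsmall x y ?_
    funext i
    have hx := bmap_eq X (n + 1) x i.1 i.2
    have hy := bmap_eq X (n + 1) y i.1 i.2
    rw [show i = ⟨i.1, i.2⟩ from Fin.ext rfl, hx, hy, hxy]
  have hle : dist x y ≤ 0 := by
    by_contra hlt
    push_neg at hlt
    obtain ⟨n, hn⟩ := exists_nat_one_div_lt hlt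
    rw [one_div] at hn
    exact absurd (key n) (not_le.mpr hn)
  exact dist_le_zero.mp hle

lemma bmap_surjective : Function.Surjective (bmap X) := by
  intro g
  set A : ℕ → Set X := fun n => (bseq X n).p ⁻¹' {fun i => g i.1} with hA
  have hAne : ∀ n, (A n).Nonempty := by
    intro n
    obtain ⟨x, hx⟩ := (bseq X n).surj (fun i => g i.1)
    exact ⟨x, hx⟩
  have hAclosed : ∀ n, IsClosed (A n) := fun n => ((bseq X n).lc.isClopen_fiber _).1
  have hAmono : ∀ n, A (n + 1) ⊆ A n := by
    intro n x hx
    obtain ⟨hk, hc⟩ := bseq_compat X (Nat.le_succ n)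
    simp only [hA, mem_preimage, mem_singleton_iff] at hx ⊢
    funext i
    have := hc x i
    rw [hx] at this
    exact this.symm
  obtain ⟨x, hx⟩ := IsCompact.nonempty_iInter_of_sequence_nonempty_isCompact_isClosed A
    hAmono hAne ((hAclosed 0).isCompact) hAclosed
  refine ⟨x, funext fun m => ?_⟩
  have hxA : x ∈ A (m + 1) := mem_iInter.mp hx (m + 1)
  simp only [hA, mem_preimage, mem_singleton_iff] at hxA
  have := congrFun hxA ⟨m, lt_of_lt_of_le (Nat.lt_succ_self m) (bseq_k_ge X (m + 1))⟩
  exact this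

theorem brouwer_metric : Nonempty (X ≃ₜ (ℕ → Bool)) :=
  ⟨Continuous.homeoOfEquivCompactToT2
    (f := Equiv.ofBijective (bmap X) ⟨bmap_injective X, bmap_surjective X⟩)
    (bmap_continuous X)⟩

end Main

/-- Every non-empty compact metrizable totally disconnected perfect (dense-in-itself)
topological space is homeomorphic to the Cantor set (realized as `ℕ → Bool`). -/
theorem stmt_18 {X : Type*} [TopologicalSpace X] [CompactSpace X]
    [TopologicalSpace.MetrizableSpace X] [TotallyDisconnectedSpace X]
    [PerfectSpace X] [Nonempty X] :
    Nonempty (X ≃ₜ (ℕ → Bool)) := by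
  letI : MetricSpace X := TopologicalSpace.metrizableSpaceMetric X
  exact brouwer_metric X
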